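/- Let T be a self-adjoint linear endomorphism of V with T ∘ T = 0 and T ≠ 0. Then there exists a null vector l ∈ V such that the range of T is contained in ℝ·l and T(w) = 0 for every w ∈ {l}⊥. -/

import Mathlib

/-- If `T` is a nonzero self-adjoint endomorphism of a Lorentzian vector space
`(V, g)` with `T ∘ T = 0`, then there is a null vector `l` such that the range of `T` is
contained in `ℝ • l` and `T` annihilates `{l}⊥`. -/
theorem stmt4 {V : Type*} [AddCommGroup V] [Module ℝ V]
    {n : ℕ} (hn : 2 ≤ n)
    (g : V →ₗ[ℝ] V →ₗ[ℝ] ℝ)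
    (hg_symm : ∀ x y : V, g x y = g y x)
    (b : Module.Basis (Fin n) ℝ V)
    (hb : ∀ i j : Fin n, g (b i) (b j) =
      if i = j then (if (i : ℕ) = 0 then (-1 : ℝ) else 1) else 0)
    (T : V →ₗ[ℝ] V)
    (hT : ∀ x y : V, g (T x) y = g x (T y))
    (hTT : T ∘ₗ T = 0) (hT0 : T ≠ 0) :
    ∃ l : V, l ≠ 0 ∧ g l l = 0 ∧ (∀ x : V, ∃ c : ℝ, T x = c • l) ∧
      (∀ w : V, g l w = 0 → T w = 0) := by
  classical
  have hn0 : 0 < n := by omega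
  set z0 : Fin n := ⟨0, hn0⟩ with hz0def
  -- key expansion formula
  have key : ∀ u w : V, g u w =
      ∑ i : Fin n, (if (i:ℕ) = 0 then (-1:ℝ) else 1) * (b.repr u i * b.repr w i) := by
    intro u w
    calc g u w = ∑ i : Fin n, ∑ j : Fin n, b.repr u i * (b.repr w j * g (b i) (b j)) := by
          conv_lhs => rw [← b.sum_repr u, ← b.sum_repr w]
          simp only [map_sum, map_smul, LinearMap.sum_apply, LinearMap.smul_apply, smul_eq_mul,
            Finset.mul_sum]
          rw [Finset.sum_comm]
          exact Finset.sum_congr rfl fun i _ => Finset.sum_congr rfl fun j _ => by ring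
      _ = _ := by
          refine Finset.sum_congr rfl fun i _ => ?_
          simp only [hb, mul_ite, mul_zero, Finset.sum_ite_eq', Finset.mem_univ, if_true]
          by_cases h : (i:ℕ) = 0 <;> simp [h]
  have key2 : ∀ u w : V, g u w = -(b.repr u z0 * b.repr w z0)
      + ∑ i ∈ Finset.univ.erase z0, b.repr u i * b.repr w i := by
    intro u w
    rw [key u w, ← Finset.add_sum_erase _ _ (Finset.mem_univ z0)]
    congr 1
    · simp [hz0def]
    · refine Finset.sum_congr rfl fun i hi => ?_
      have hi0 : (i:ℕ) ≠ 0 := by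
        intro h
        exact (Finset.mem_erase.mp hi).1 (Fin.ext h)
      simp [hi0]
  have hvec0 : ∀ u : V, (∀ i, b.repr u i = 0) → u = 0 := by
    intro u h
    have : b.repr u = 0 := Finsupp.ext h
    exact b.repr.map_eq_zero_iff.mp this
  -- parallel lemma
  have par : ∀ u w : V, u ≠ 0 → g u u = 0 → g w w = 0 → g u w = 0 →
      ∃ c : ℝ, w = c • u := by
    intro u w hu huu hww huw
    set x : Fin n → ℝ := fun i => b.repr u i with hx
    set y : Fin n → ℝ := fun i => b.repr w i with hy
    set S := Finset.univ.erase z0 with hS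
    have hA : ∑ i ∈ S, x i * x i = x z0 * x z0 := by
      have h := key2 u u; rw [huu] at h; linarith [h]
    have hB : ∑ i ∈ S, y i * y i = y z0 * y z0 := by
      have h := key2 w w; rw [hww] at h; linarith [h]
    have hC : ∑ i ∈ S, x i * y i = x z0 * y z0 := by
      have h := key2 u w; rw [huw] at h; linarith [h]
    have hx0 : x z0 ≠ 0 := by
      intro h0
      apply hu
      apply hvec0
      have hsum : ∑ i ∈ S, x i * x i = 0 := by rw [hA, h0]; ring
      have hall := (Finset.sum_eq_zero_iff_of_nonneg
        (fun i _ => mul_self_nonneg (x i))).mp hsum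
      intro i
      by_cases hi : i = z0
      · rw [hi]; exact h0
      · exact mul_self_eq_zero.mp (hall i (Finset.mem_erase.mpr ⟨hi, Finset.mem_univ i⟩))
    have hz : ∑ i ∈ S, (x z0 * y i - y z0 * x i)^2 = 0 := by
      have expand : ∀ i ∈ S, (x z0 * y i - y z0 * x i)^2 =
          (x z0 * x z0) * (y i * y i) - (2 * (x z0 * y z0)) * (x i * y i)
            + (y z0 * y z0) * (x i * x i) := fun i _ => by ring
      rw [Finset.sum_congr rfl expand, Finset.sum_add_distrib, Finset.sum_sub_distrib,
        ← Finset.mul_sum, ← Finset.mul_sum, ← Finset.mul_sum, hA, hB, hC]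
      ring
    have heach : ∀ i, x z0 * y i = y z0 * x i := by
      intro i
      by_cases hi : i = z0
      · rw [hi]; ring
      · have h := (Finset.sum_eq_zero_iff_of_nonneg
          (fun i _ => sq_nonneg (x z0 * y i - y z0 * x i))).mp hz i
          (Finset.mem_erase.mpr ⟨hi, Finset.mem_univ i⟩)
        have := pow_eq_zero_iff (n := 2) (by norm_num) |>.mp h
        linarith [this]
    refine ⟨y z0 / x z0, ?_⟩
    apply b.repr.injective
    ext i
    simp only [map_smul, Finsupp.smul_apply, smul_eq_mul]
    rw [div_mul_eq_mul_div, eq_div_iff hx0]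
    have := heach i
    show y i * x z0 = y z0 * x i
    linarith [this]
  -- setup
  obtain ⟨v, hv⟩ : ∃ v, T v ≠ 0 := by
    by_contra h
    push_neg at h
    exact hT0 (LinearMap.ext h)
  have hTTz : ∀ a : V, T (T a) = 0 := by
    intro a
    have := LinearMap.ext_iff.mp hTT a
    simpa using this
  have hiso : ∀ a c : V, g (T a) (T c) = 0 := by
    intro a c
    rw [hT, hTTz c]
    simp
  set l := T v with hl
  have hll : g l l = 0 := hiso v v
  have hrange : ∀ x : V, ∃ c : ℝ, T x = c • l :=
    fun x => par l (T x) hv hll (hiso x x) (hiso v x)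
  refine ⟨l, hv, hll, hrange, ?_⟩
  intro w hw
  obtain ⟨i, hi⟩ : ∃ i, b.repr l i ≠ 0 := by
    by_contra h
    push_neg at h
    exact hv (hvec0 l h)
  have hzne : g l (b i) ≠ 0 := by
    rw [key]
    simp only [Module.Basis.repr_self, Finsupp.single_apply, mul_ite, mul_one, mul_zero,
      ite_mul, zero_mul]
    rw [Finset.sum_ite_eq]
    simp only [Finset.mem_univ, if_true]
    by_cases h0 : (i:ℕ) = 0 <;> simp [h0, hi]
  obtain ⟨c, hc⟩ := hrange w
  obtain ⟨c', hc'⟩ := hrange (b i)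
  have h1 : g (T w) (b i) = c * g l (b i) := by
    rw [hc]; simp
  have h2 : g (T w) (b i) = 0 := by
    rw [hT, hc']
    simp only [map_smul, smul_eq_mul]
    rw [hg_symm w l, hw, mul_zero]
  have hc0 : c = 0 := by
    have : c * g l (b i) = 0 := by rw [← h1, h2]
    exact (mul_eq_zero.mp this).resolve_right hzne
  rw [hc, hc0, zero_smul]
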